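/- For every n ≥ 1 and every subset S of vertices of Q^n with |S| = 2^{n-1}+1, the largest eigenvalue of the adjacency matrix of the subgraph of Q^n induced on S is at least √n. -/

import Mathlib

open scoped Classical
open Matrix

def hypercube (n : ℕ) : SimpleGraph (Fin n → Fin 2) where
  Adj x y := (Finset.univ.filter fun i => x i ≠ y i).card = 1
  symm := by
    constructor
    intro x y h
    simpa [ne_comm] using h
  loopless := by
    constructor
    intro x h
    simp at h

def cubeEquiv (n : ℕ) : (Fin (n+1) → Fin 2) ≃ ((Fin n → Fin 2) ⊕ (Fin n → Fin 2)) :=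
  (Fin.consEquiv (fun _ : Fin (n+1) => Fin 2)).symm.trans
    ((finTwoEquiv.prodCongr (Equiv.refl _)).trans (Equiv.boolProdEquivSum _))

lemma cubeEquiv_zero (n : ℕ) (x : Fin (n+1) → Fin 2) (h : x 0 = 0) :
    cubeEquiv n x = Sum.inl (Fin.tail x) := by
  simp [cubeEquiv, Fin.consEquiv, h, finTwoEquiv, Fin.tail]

lemma cubeEquiv_one (n : ℕ) (x : Fin (n+1) → Fin 2) (h : x 0 = 1) :
    cubeEquiv n x = Sum.inr (Fin.tail x) := by
  simp [cubeEquiv, Fin.consEquiv, h, finTwoEquiv, Fin.tail]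

/-- Huang's signed adjacency matrix of the hypercube. -/
noncomputable def signM : (n : ℕ) → Matrix (Fin n → Fin 2) (Fin n → Fin 2) ℝ
  | 0 => 0
  | n+1 => Matrix.reindex (cubeEquiv n).symm (cubeEquiv n).symm
      (Matrix.fromBlocks (signM n) 1 1 (-(signM n)))

lemma adj_succ (n : ℕ) (x y : Fin (n+1) → Fin 2) :
    (hypercube (n+1)).Adj x y ↔
      (x 0 = y 0 ∧ (hypercube n).Adj (Fin.tail x) (Fin.tail y)) ∨
      (x 0 ≠ y 0 ∧ Fin.tail x = Fin.tail y) := by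
  show (Finset.univ.filter fun i => x i ≠ y i).card = 1 ↔ _
  have hc : ∀ (m : ℕ) (u v : Fin m → Fin 2),
      (Finset.univ.filter fun i => u i ≠ v i).card
        = ∑ i : Fin m, (if u i ≠ v i then 1 else 0) := by
    intro m u v
    rw [Finset.card_filter]
  rw [hc, Fin.sum_univ_succ]
  have htail : (∑ i : Fin n, if x i.succ ≠ y i.succ then 1 else 0)
      = (Finset.univ.filter fun i => Fin.tail x i ≠ Fin.tail y i).card := by
    rw [hc n (Fin.tail x) (Fin.tail y)]; rfl
  rw [htail]
  by_cases h : x 0 = y 0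
  · rw [if_neg (not_not_intro h), zero_add]
    constructor
    · intro hcard; left; exact ⟨h, hcard⟩
    · rintro (⟨_, hadj⟩ | ⟨hne, _⟩)
      · exact hadj
      · exact absurd h hne
  · rw [if_pos h]
    constructor
    · intro hcard
      right
      refine ⟨h, ?_⟩
      have : (Finset.univ.filter fun i => Fin.tail x i ≠ Fin.tail y i).card = 0 := by omega
      funext i
      by_contra hne
      have : i ∈ Finset.univ.filter fun i => Fin.tail x i ≠ Fin.tail y i := by
        simp [hne]
      rw [Finset.card_eq_zero] at *
      simp_all
    · rintro (⟨heq, _⟩ | ⟨_, htl⟩)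
      · exact absurd heq h
      · have : (Finset.univ.filter fun i => Fin.tail x i ≠ Fin.tail y i).card = 0 := by
          rw [Finset.card_eq_zero, Finset.filter_eq_empty_iff]
          intro i _
          simp [htl]
        omega

lemma signM_abs (n : ℕ) (x y : Fin n → Fin 2) :
    |signM n x y| = if (hypercube n).Adj x y then 1 else 0 := by
  induction n with
  | zero =>
      have : ¬ (hypercube 0).Adj x y := by
        simp [hypercube]
      simp [signM, this]
  | succ n ih =>
      have fin2 : ∀ a : Fin 2, a = 0 ∨ a = 1 := by decide
      have key : signM (n+1) x y
          = Matrix.fromBlocks (signM n) 1 1 (-(signM n)) (cubeEquiv n x) (cubeEquiv n y) := by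
        simp [signM, Matrix.reindex_apply, Matrix.submatrix_apply]
      rw [key, adj_succ]
      rcases fin2 (x 0) with hx | hx <;> rcases fin2 (y 0) with hy | hy
      · rw [cubeEquiv_zero n x hx, cubeEquiv_zero n y hy]
        simp only [Matrix.fromBlocks_apply₁₁, hx, hy, ih]
        by_cases h : (hypercube n).Adj (Fin.tail x) (Fin.tail y) <;> simp [h]
      · rw [cubeEquiv_zero n x hx, cubeEquiv_one n y hy]
        simp only [Matrix.fromBlocks_apply₁₂, hx, hy]
        have : x 0 ≠ y 0 := by rw [hx, hy]; decide
        by_cases h : Fin.tail x = Fin.tail y <;>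
          simp [Matrix.one_apply, h, this]
      · rw [cubeEquiv_one n x hx, cubeEquiv_zero n y hy]
        simp only [Matrix.fromBlocks_apply₂₁, hx, hy]
        have : x 0 ≠ y 0 := by rw [hx, hy]; decide
        by_cases h : Fin.tail x = Fin.tail y <;>
          simp [Matrix.one_apply, h, this]
      · rw [cubeEquiv_one n x hx, cubeEquiv_one n y hy]
        simp only [Matrix.fromBlocks_apply₂₂, hx, hy, Matrix.neg_apply, abs_neg, ih]
        by_cases h : (hypercube n).Adj (Fin.tail x) (Fin.tail y) <;> simp [h]

lemma signM_mul_self (n : ℕ) : signM n * signM n = (n : ℝ) • 1 := by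
  induction n with
  | zero => simp [signM]
  | succ n ih =>
      have hdef : signM (n+1) = (Matrix.fromBlocks (signM n) 1 1
          (-(signM n))).submatrix (cubeEquiv n) (cubeEquiv n) := by
        rw [signM, Matrix.reindex_apply]; simp
      rw [hdef, Matrix.submatrix_mul_equiv,
        Matrix.fromBlocks_multiply]
      have h11 : signM n * signM n + 1 * 1 = ((n:ℝ)+1) • (1 : Matrix _ _ ℝ) := by
        rw [ih]; rw [add_smul, one_smul, one_mul]
      have h12 : signM n * 1 + 1 * -signM n = 0 := by simp
      have h21 : 1 * signM n + -signM n * 1 = 0 := by simp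
      have h22 : 1 * 1 + -signM n * -signM n = ((n:ℝ)+1) • (1 : Matrix _ _ ℝ) := by
        rw [neg_mul_neg, ih, one_mul]; rw [add_smul, one_smul, add_comm]
      rw [h11, h12, h21, h22]
      have : Matrix.fromBlocks (((n:ℝ)+1) • (1 : Matrix (Fin n → Fin 2) _ ℝ)) 0 0
          (((n:ℝ)+1) • (1 : Matrix (Fin n → Fin 2) _ ℝ))
          = ((n:ℝ)+1) • (1 : Matrix ((Fin n → Fin 2) ⊕ (Fin n → Fin 2))
              ((Fin n → Fin 2) ⊕ (Fin n → Fin 2)) ℝ) := by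
        have h1 := Matrix.fromBlocks_one (l := Fin n → Fin 2) (m := Fin n → Fin 2) (α := ℝ)
        rw [← h1, Matrix.fromBlocks_smul]
        simp
      rw [this]
      have hsub : (((n:ℝ)+1) • (1 : Matrix ((Fin n → Fin 2) ⊕ (Fin n → Fin 2))
            ((Fin n → Fin 2) ⊕ (Fin n → Fin 2)) ℝ)).submatrix (cubeEquiv n) (cubeEquiv n)
          = ((n:ℝ)+1) • ((1 : Matrix ((Fin n → Fin 2) ⊕ (Fin n → Fin 2))
            ((Fin n → Fin 2) ⊕ (Fin n → Fin 2)) ℝ).submatrix (cubeEquiv n) (cubeEquiv n)) := rfl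
      rw [hsub, Matrix.submatrix_one_equiv]
      norm_cast


lemma signM_trace (n : ℕ) : Matrix.trace (signM n) = 0 := by
  have h : ∀ x, signM n x x = 0 := by
    intro x
    have := signM_abs n x x
    rw [if_neg (SimpleGraph.irrefl _)] at this
    exact abs_eq_zero.mp this
  simp [Matrix.trace, Matrix.diag, h]

noncomputable def extMap (n : ℕ) (S : Finset (Fin n → Fin 2)) :
    (↥S → ℝ) →ₗ[ℝ] ((Fin n → Fin 2) → ℝ) where
  toFun f := fun x => if h : x ∈ S then f ⟨x, h⟩ else 0
  map_add' f g := by funext x; by_cases h : x ∈ S <;> simp [h]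
  map_smul' c f := by funext x; by_cases h : x ∈ S <;> simp [h]

lemma extMap_inj (n : ℕ) (S : Finset (Fin n → Fin 2)) : Function.Injective (extMap n S) := by
  intro f g hfg
  funext x
  have := congrFun hfg x.1
  simpa [extMap, x.2] using this

lemma exists_eigenvector (n : ℕ) (hn : 1 ≤ n) (S : Finset (Fin n → Fin 2))
    (hS : S.card = 2 ^ (n - 1) + 1) :
    ∃ v : (Fin n → Fin 2) → ℝ, v ≠ 0 ∧ signM n *ᵥ v = Real.sqrt n • v ∧ ∀ x ∉ S, v x = 0 := by
  set s : ℝ := Real.sqrt n with hsdef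
  have hss : s * s = (n : ℝ) := Real.mul_self_sqrt (Nat.cast_nonneg n)
  have hspos : 0 < s := Real.sqrt_pos.mpr (by exact_mod_cast hn)
  set B := signM n with hBdef
  set P : Matrix (Fin n → Fin 2) (Fin n → Fin 2) ℝ := (2*s)⁻¹ • (B + s • 1) with hPdef
  have h2s : (2*s) ≠ 0 := by positivity
  have hexp : (B + s • 1) * (B + s • 1) = (2*s) • (B + s • 1) := by
    rw [mul_add, add_mul, add_mul, signM_mul_self, Matrix.smul_mul, Matrix.mul_smul,
      Matrix.smul_mul, Matrix.mul_smul, one_mul, mul_one, one_mul, smul_smul, hss]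
    rw [smul_add]
    ext x y
    simp only [Matrix.add_apply, Matrix.smul_apply, smul_eq_mul]
    rw [← hss]
    ring
  have hPP : P * P = P := by
    rw [hPdef, Matrix.smul_mul, Matrix.mul_smul, hexp, smul_smul, smul_smul]
    congr 1
    field_simp
  have hexp2 : B * (B + s • 1) = s • (B + s • 1) := by
    rw [mul_add, signM_mul_self, Matrix.mul_smul, mul_one, smul_add, smul_smul]
    ext x y
    simp only [Matrix.add_apply, Matrix.smul_apply, smul_eq_mul]
    rw [← hss]
    ring
  have hBP : B * P = s • P := by
    rw [hPdef, Matrix.mul_smul, hexp2, smul_comm]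
  have hcard : Fintype.card (Fin n → Fin 2) = 2 ^ n := by simp
  have htr : Matrix.trace P = ((2:ℝ)) ^ (n-1) := by
    rw [hPdef, Matrix.trace_smul, Matrix.trace_add, Matrix.trace_smul, Matrix.trace_one,
      signM_trace, hcard, zero_add, smul_eq_mul, smul_eq_mul]
    have h2n : (2:ℝ)^n = 2 * 2^(n-1) := by
      rw [← pow_succ']
      congr 1
      omega
    field_simp [h2n]
    rw [Nat.cast_pow, Nat.cast_ofNat, h2n]
  -- the projection as a linear map
  set Pl := Matrix.toLin' P with hPl
  have hProj : LinearMap.IsProj (LinearMap.range Pl) Pl := by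
    constructor
    · intro x; exact LinearMap.mem_range_self _ x
    · rintro x ⟨u, rfl⟩
      show Pl (Pl u) = Pl u
      rw [hPl]
      show (P *ᵥ (P *ᵥ u)) = P *ᵥ u
      rw [Matrix.mulVec_mulVec, hPP]
  have htrace := LinearMap.IsProj.trace hProj
  have htrace2 : LinearMap.trace ℝ _ Pl = Matrix.trace P := by
    rw [LinearMap.trace_eq_matrix_trace ℝ (Pi.basisFun ℝ (Fin n → Fin 2)),
      LinearMap.toMatrix_eq_toMatrix', hPl, LinearMap.toMatrix'_toLin']
  have hWdim : Module.finrank ℝ (LinearMap.range Pl) = 2 ^ (n-1) := by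
    have : ((Module.finrank ℝ (LinearMap.range Pl) : ℝ)) = (2:ℝ)^(n-1) := by
      rw [← htrace, htrace2, htr]
    exact_mod_cast this
  set W := LinearMap.range Pl with hW
  set U := LinearMap.range (extMap n S) with hU
  have hUdim : Module.finrank ℝ U = S.card := by
    rw [hU, LinearMap.finrank_range_of_inj (extMap_inj n S)]
    simp [Module.finrank_fintype_fun_eq_card]
  have hsum := Submodule.finrank_sup_add_finrank_inf_eq W U
  have hle : Module.finrank ℝ ↥(W ⊔ U) ≤ 2 ^ n := by
    have := Submodule.finrank_le (W ⊔ U)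
    rwa [Module.finrank_fintype_fun_eq_card, hcard] at this
  have hpow : 2^(n-1) + 2^(n-1) = 2^n := by
    rw [← two_mul, ← pow_succ']
    congr 1
    omega
  have hinf : 0 < Module.finrank ℝ ↥(W ⊓ U) := by
    rw [hWdim, hUdim, hS] at hsum
    omega
  obtain ⟨⟨v, hv⟩, hvne⟩ := Module.finrank_pos_iff_exists_ne_zero.mp hinf
  refine ⟨v, ?_, ?_, ?_⟩
  · intro h
    apply hvne
    simpa using h
  · obtain ⟨u, hu⟩ := hv.1
    have : B *ᵥ (P *ᵥ u) = s • (P *ᵥ u) := by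
      rw [Matrix.mulVec_mulVec, hBP, Matrix.smul_mulVec]
    have hPu : P *ᵥ u = v := by
      rw [← hu, hPl]
      rfl
    rwa [hPu] at this
  · intro x hx
    obtain ⟨f, hf⟩ := hv.2
    rw [← hf]
    simp [extMap, hx]


/-- Rayleigh quotient bound: quadratic form is at most max eigenvalue times norm squared. -/
lemma rayleigh_bound {m : Type*} [Fintype m] [DecidableEq m] {A : Matrix m m ℝ}
    (hA : A.IsHermitian) (μ : ℝ) (hμ : ∀ i, hA.eigenvalues i ≤ μ) (w : m → ℝ) :
    w ⬝ᵥ (A *ᵥ w) ≤ μ * (w ⬝ᵥ w) := by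
  set Um : Matrix m m ℝ := (hA.eigenvectorUnitary : Matrix m m ℝ) with hUm
  set c : m → ℝ := star Um *ᵥ w with hc
  have hcw : Um *ᵥ c = w := by
    rw [hc, Matrix.mulVec_mulVec]
    have : Um * star Um = 1 := Matrix.mem_unitaryGroup_iff.mp hA.eigenvectorUnitary.2
    rw [this, Matrix.one_mulVec]
  have hstar : star Um = Umᵀ := by
    ext i j
    simp [Matrix.star_apply]
  have hdot : ∀ z : m → ℝ, w ⬝ᵥ (Um *ᵥ z) = c ⬝ᵥ z := by
    intro z
    calc w ⬝ᵥ (Um *ᵥ z) = (Um *ᵥ c) ⬝ᵥ (Um *ᵥ z) := by rw [hcw]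
      _ = ((Um *ᵥ c) ᵥ* Um) ⬝ᵥ z := Matrix.dotProduct_mulVec _ _ _
      _ = (c ᵥ* (Umᵀ * Um)) ⬝ᵥ z := by rw [Matrix.vecMul_mulVec]
      _ = c ⬝ᵥ z := by
          rw [← hstar, Matrix.mem_unitaryGroup_iff'.mp hA.eigenvectorUnitary.2,
            Matrix.vecMul_one]
  have hspec : A = Um * Matrix.diagonal hA.eigenvalues * star Um := by
    have h := hA.spectral_theorem
    have h2 : RCLike.ofReal ∘ hA.eigenvalues = hA.eigenvalues := by
      funext i
      simp
    rw [h2] at h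
    exact h
  have hAw : A *ᵥ w = Um *ᵥ (Matrix.diagonal hA.eigenvalues *ᵥ c) := by
    conv_lhs => rw [hspec]
    rw [Matrix.mul_assoc, ← Matrix.mulVec_mulVec, ← Matrix.mulVec_mulVec]
  have hcc : c ⬝ᵥ c = w ⬝ᵥ w := by
    have := hdot c
    rw [hcw] at this
    exact this.symm
  rw [hAw, hdot]
  have hterm : (c ⬝ᵥ (Matrix.diagonal hA.eigenvalues *ᵥ c))
      = ∑ i, hA.eigenvalues i * (c i * c i) := by
    simp only [dotProduct, Matrix.mulVec_diagonal]
    apply Finset.sum_congr rfl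
    intro i _
    ring
  rw [hterm, ← hcc]
  have : (∑ i, hA.eigenvalues i * (c i * c i)) ≤ ∑ i, μ * (c i * c i) := by
    apply Finset.sum_le_sum
    intro i _
    exact mul_le_mul_of_nonneg_right (hμ i) (mul_self_nonneg _)
  refine this.trans ?_
  rw [← Finset.mul_sum]
  rfl

theorem induced_subgraph_largest_eigenvalue (n : ℕ) (hn : 1 ≤ n)
    (S : Finset (Fin n → Fin 2)) (hS : S.card = 2 ^ (n - 1) + 1) :
    ∃ μ ∈ spectrum ℝ
        (Matrix.of fun x y : ↥S => if (hypercube n).Adj x.1 y.1 then (1 : ℝ) else 0),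
      Real.sqrt n ≤ μ := by
  obtain ⟨v, hv0, hvB, hvS⟩ := exists_eigenvector n hn S hS
  set A' : Matrix ↥S ↥S ℝ :=
    Matrix.of (fun x y : ↥S => if (hypercube n).Adj x.1 y.1 then (1 : ℝ) else 0) with hA'
  have hherm : A'.IsHermitian := by
    show A'ᴴ = A'
    ext x y
    simp only [Matrix.conjTranspose_apply, hA', Matrix.of_apply, star_trivial]
    rw [SimpleGraph.adj_comm]
  have hSne : S.Nonempty := by
    rw [← Finset.card_pos, hS]; positivity
  haveI : Nonempty ↥S := ⟨⟨hSne.choose, hSne.choose_spec⟩⟩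
  obtain ⟨i₀, -, hmax⟩ := Finset.exists_max_image Finset.univ hherm.eigenvalues
    ⟨Classical.arbitrary ↥S, Finset.mem_univ _⟩
  refine ⟨hherm.eigenvalues i₀, hherm.eigenvalues_mem_spectrum_real i₀, ?_⟩
  set μ := hherm.eigenvalues i₀ with hμdef
  set w : ↥S → ℝ := fun x => |v x.1| with hw
  have hray := rayleigh_bound hherm μ (fun i => hmax i (Finset.mem_univ i)) w
  -- |v| vanishes off S
  have hzero : ∀ x ∉ S, |v x| = 0 := fun x hx => by rw [hvS x hx, abs_zero]
  -- equality of norms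
  have hvv : w ⬝ᵥ w = v ⬝ᵥ v := by
    show (∑ x : ↥S, |v x.1| * |v x.1|) = ∑ x, v x * v x
    rw [Finset.sum_coe_sort S (fun x => |v x| * |v x|)]
    calc (∑ x ∈ S, |v x| * |v x|) = ∑ x ∈ S, v x * v x :=
          Finset.sum_congr rfl fun x _ => abs_mul_abs_self _
      _ = ∑ x, v x * v x := Finset.sum_subset (Finset.subset_univ S)
          (fun x _ hx => by rw [hvS x hx, mul_zero])
  have hpos : 0 < w ⬝ᵥ w := by
    rw [hvv]
    obtain ⟨x₀, hx₀⟩ := Function.ne_iff.mp hv0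
    exact Finset.sum_pos' (fun i _ => mul_self_nonneg _)
      ⟨x₀, Finset.mem_univ _, mul_self_pos.mpr hx₀⟩
  -- the quadratic form inequality
  set F : (Fin n → Fin 2) → (Fin n → Fin 2) → ℝ :=
    fun x y => |v x| * ((if (hypercube n).Adj x y then 1 else 0) * |v y|) with hF
  have key : ∀ x y, v x * (signM n x y * v y) ≤ F x y := by
    intro x y
    rw [hF]
    dsimp only
    rw [← signM_abs n x y]
    calc v x * (signM n x y * v y) ≤ |v x * (signM n x y * v y)| := le_abs_self _
      _ = |v x| * (|signM n x y| * |v y|) := by rw [abs_mul, abs_mul]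
  have hLHS : v ⬝ᵥ (signM n *ᵥ v) = ∑ x, ∑ y, v x * (signM n x y * v y) := by
    simp only [dotProduct, Matrix.mulVec, Finset.mul_sum]
  have hRHS : w ⬝ᵥ (A' *ᵥ w) = ∑ x, ∑ y, F x y := by
    show (∑ x : ↥S, w x * (∑ y : ↥S, A' x y * w y)) = _
    have hterm : ∀ x : ↥S, w x * (∑ y : ↥S, A' x y * w y) = ∑ y : ↥S, F x.1 y.1 := by
      intro x
      rw [Finset.mul_sum]
      apply Finset.sum_congr rfl
      intro y _
      simp only [hF, hA', hw, Matrix.of_apply]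
    rw [Finset.sum_congr rfl fun x _ => hterm x]
    have hinner : ∀ x, (∑ y : ↥S, F x y.1) = ∑ y, F x y := by
      intro x
      rw [Finset.sum_coe_sort S (fun y => F x y)]
      apply Finset.sum_subset (Finset.subset_univ S)
      intro y _ hy
      rw [hF]
      dsimp only
      rw [hzero y hy, mul_zero, mul_zero]
    rw [Finset.sum_congr rfl fun x _ => hinner x.1]
    rw [Finset.sum_coe_sort S (fun x => ∑ y, F x y)]
    apply Finset.sum_subset (Finset.subset_univ S)
    intro x _ hx
    apply Finset.sum_eq_zero
    intro y _
    rw [hF]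
    dsimp only
    rw [hzero x hx, zero_mul]
  have hstep : Real.sqrt n * (w ⬝ᵥ w) ≤ μ * (w ⬝ᵥ w) := by
    calc Real.sqrt n * (w ⬝ᵥ w) = Real.sqrt n * (v ⬝ᵥ v) := by rw [hvv]
      _ = v ⬝ᵥ (signM n *ᵥ v) := by
          rw [hvB, dotProduct_smul, smul_eq_mul]
      _ = ∑ x, ∑ y, v x * (signM n x y * v y) := hLHS
      _ ≤ ∑ x, ∑ y, F x y :=
          Finset.sum_le_sum fun x _ => Finset.sum_le_sum fun y _ => key x y
      _ = w ⬝ᵥ (A' *ᵥ w) := hRHS.symm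
      _ ≤ μ * (w ⬝ᵥ w) := hray
  exact le_of_mul_le_mul_right hstep hpos
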